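/- If ∀X⃗.(A ⇒ Y) ≡ ∀Z⃗.(B ⇒ W), where Y and W are type variables, then the quantifier prefixes are equal (X⃗ = Z⃗), A ≡ B, and Y = W. -/
import Mathlib


/-- Types of Polymorphic System I: variables, arrows, conjunctions, universal types. -/
inductive Ty : Type
  | var : ℕ → Ty
  | arr : Ty → Ty → Ty
  | conj : Ty → Ty → Ty
  | all : ℕ → Ty → Ty
deriving DecidableEq

/-- Free type variables. -/
def ftv : Ty → Finset ℕ
  | .var X => {X}
  | .arr A B => ftv A ∪ ftv B
  | .conj A B => ftv A ∪ ftv B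
  | .all X A => ftv A \ {X}

/-- Type isomorphism ≡: the smallest congruence generated by the six isomorphisms of PSI. -/
inductive TyEquiv : Ty → Ty → Prop
  | comm (A B) : TyEquiv (.conj A B) (.conj B A)
  | assoc (A B C) : TyEquiv (.conj A (.conj B C)) (.conj (.conj A B) C)
  | distArr (A B C) : TyEquiv (.arr A (.conj B C)) (.conj (.arr A B) (.arr A C))
  | curry (A B C) : TyEquiv (.arr (.conj A B) C) (.arr A (.arr B C))
  | allArr (X A B) : X ∉ ftv A → TyEquiv (.all X (.arr A B)) (.arr A (.all X B))
  | allConj (X A B) : TyEquiv (.all X (.conj A B)) (.conj (.all X A) (.all X B))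
  | refl (A) : TyEquiv A A
  | symm {A B} : TyEquiv A B → TyEquiv B A
  | trans {A B C} : TyEquiv A B → TyEquiv B C → TyEquiv A C
  | congArr {A A' B B'} : TyEquiv A A' → TyEquiv B B' → TyEquiv (.arr A B) (.arr A' B')
  | congConj {A A' B B'} : TyEquiv A A' → TyEquiv B B' → TyEquiv (.conj A B) (.conj A' B')
  | congAll (X) {A B} : TyEquiv A B → TyEquiv (.all X A) (.all X B)

/-- Auxiliary for PF: turn ∀X⃗.(C ⇒ Y) into ∀X⃗.((A ∧ C) ⇒ Y). -/
def pushArr (A : Ty) : Ty → Ty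
  | .all X t => .all X (pushArr A t)
  | .arr C Y => .arr (.conj A C) Y
  | t => t

/-- Multiset of prime factors of a type. -/
def PF : Ty → Multiset Ty
  | .var X => {.var X}
  | .arr A B => (PF B).map (pushArr A)
  | .conj A B => PF A + PF B
  | .all X A => (PF A).map (.all X)

/-- Being of the form ∀X₁...∀Xₙ.(B ⇒ Y) with Y a type variable. -/
inductive IsPrimeForm : Ty → Prop
  | base (B Y) : IsPrimeForm (.arr B (.var Y))
  | step (X) {t} : IsPrimeForm t → IsPrimeForm (.all X t)

/-- Conjunction of a (nonempty) list of types, A₁ ∧ ... ∧ Aₙ. -/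
def conjList : List Ty → Ty
  | [] => .var 0
  | [A] => A
  | A :: l => .conj A (conjList l)

/-- ∀X₁...∀Xₙ.A -/
def allList (l : List ℕ) (A : Ty) : Ty := l.foldr .all A

/-- Substitution of a type for a type variable in a type. -/
def substTy (X : ℕ) (B : Ty) : Ty → Ty
  | .var Y => if Y = X then B else .var Y
  | .arr C D => .arr (substTy X B C) (substTy X B D)
  | .conj C D => .conj (substTy X B C) (substTy X B D)
  | .all Y C => if Y = X then .all Y C else .all Y (substTy X B C)

/-- Terms of PSI (Church style). -/
inductive Tm : Type
  | var : ℕ → Ty → Tm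
  | lam : ℕ → Ty → Tm → Tm
  | app : Tm → Tm → Tm
  | pair : Tm → Tm → Tm
  | proj : Ty → Tm → Tm
  | tlam : ℕ → Tm → Tm
  | tapp : Tm → Ty → Tm

/-- Substitution of a term for a term variable. -/
def substTm (x : ℕ) (s : Tm) : Tm → Tm
  | .var y A => if y = x then s else .var y A
  | .lam y A r => if y = x then .lam y A r else .lam y A (substTm x s r)
  | .app r t => .app (substTm x s r) (substTm x s t)
  | .pair r t => .pair (substTm x s r) (substTm x s t)
  | .proj A r => .proj A (substTm x s r)
  | .tlam X r => .tlam X (substTm x s r)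
  | .tapp r A => .tapp (substTm x s r) A

/-- Substitution of a type for a type variable in a term. -/
def substTyTm (X : ℕ) (B : Ty) : Tm → Tm
  | .var y A => .var y (substTy X B A)
  | .lam y A r => .lam y (substTy X B A) (substTyTm X B r)
  | .app r t => .app (substTyTm X B r) (substTyTm X B t)
  | .pair r t => .pair (substTyTm X B r) (substTyTm X B t)
  | .proj A r => .proj (substTy X B A) (substTyTm X B r)
  | .tlam Y r => if Y = X then .tlam Y r else .tlam Y (substTyTm X B r)
  | .tapp r A => .tapp (substTyTm X B r) (substTy X B A)

abbrev Ctx := List (ℕ × Ty)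

def ftvCtx (Γ : Ctx) : Finset ℕ := Γ.foldr (fun p s => ftv p.2 ∪ s) ∅

def substCtx (X : ℕ) (B : Ty) (Γ : Ctx) : Ctx := Γ.map (fun p => (p.1, substTy X B p.2))

/-- Typing relation of PSI. -/
inductive Typing : Ctx → Tm → Ty → Prop
  | ax {Γ x A} : (x, A) ∈ Γ → Typing Γ (.var x A) A
  | equiv {Γ r A B} : Typing Γ r A → TyEquiv A B → Typing Γ r B
  | arrI {Γ x A r B} : Typing ((x, A) :: Γ) r B → Typing Γ (.lam x A r) (.arr A B)
  | arrE {Γ r s A B} : Typing Γ r (.arr A B) → Typing Γ s A → Typing Γ (.app r s) B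
  | conjI {Γ r s A B} : Typing Γ r A → Typing Γ s B → Typing Γ (.pair r s) (.conj A B)
  | conjE {Γ r A B} : Typing Γ r (.conj A B) → Typing Γ (.proj A r) A
  | allI {Γ r X A} : Typing Γ r A → X ∉ ftvCtx Γ → Typing Γ (.tlam X r) (.all X A)
  | allE {Γ r X A B} : Typing Γ r (.all X A) → Typing Γ (.tapp r B) (substTy X B A)

/-- "r has type A" (context is redundant in Church style). -/
def HasTy (r : Tm) (A : Ty) : Prop := ∃ Γ, Typing Γ r A

/-- One-step structural equivalence ⇄ (symmetric, closed under all term contexts). -/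
inductive StEq : Tm → Tm → Prop
  | comm (r s) : StEq (.pair r s) (.pair s r)
  | assoc (r s t) : StEq (.pair r (.pair s t)) (.pair (.pair r s) t)
  | distLam (x A r s) : StEq (.lam x A (.pair r s)) (.pair (.lam x A r) (.lam x A s))
  | distApp (r s t) : StEq (.app (.pair r s) t) (.pair (.app r t) (.app s t))
  | curry (r s t) : StEq (.app r (.pair s t)) (.app (.app r s) t)
  | pcommII (X x A r) : X ∉ ftv A → StEq (.tlam X (.lam x A r)) (.lam x A (.tlam X r))
  | pcommEI (X x A B r) : X ∉ ftv A → StEq (.tapp (.lam x A r) B) (.lam x A (.tapp r B))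
  | pdistII (X r s) : StEq (.tlam X (.pair r s)) (.pair (.tlam X r) (.tlam X s))
  | pdistEI (r s A) : StEq (.tapp (.pair r s) A) (.pair (.tapp r A) (.tapp s A))
  | pdistIE (X A r) : StEq (.proj (.all X A) (.tlam X r)) (.tlam X (.proj A r))
  | pdistEE (X A B C r) : HasTy r (.all X (.conj B C)) →
      StEq (.tapp (.proj (.all X B) r) A) (.proj (substTy X A B) (.tapp r A))
  | symm {r s} : StEq r s → StEq s r
  | congLam (x A) {r s} : StEq r s → StEq (.lam x A r) (.lam x A s)
  | congAppL (t) {r s} : StEq r s → StEq (.app r t) (.app s t)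
  | congAppR (t) {r s} : StEq r s → StEq (.app t r) (.app t s)
  | congPairL (t) {r s} : StEq r s → StEq (.pair r t) (.pair s t)
  | congPairR (t) {r s} : StEq r s → StEq (.pair t r) (.pair t s)
  | congProj (A) {r s} : StEq r s → StEq (.proj A r) (.proj A s)
  | congTlam (X) {r s} : StEq r s → StEq (.tlam X r) (.tlam X s)
  | congTapp (A) {r s} : StEq r s → StEq (.tapp r A) (.tapp s A)

/-- One-step reduction ↪ (typed β-reductions and typed projection, closed under contexts). -/
inductive Red : Tm → Tm → Prop
  | beta (x A r s) : HasTy s A → Red (.app (.lam x A r) s) (substTm x s r)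
  | tbeta (X A r) : Red (.tapp (.tlam X r) A) (substTyTm X A r)
  | pi (A r s) : HasTy r A → Red (.proj A (.pair r s)) r
  | congLam (x A) {r s} : Red r s → Red (.lam x A r) (.lam x A s)
  | congAppL (t) {r s} : Red r s → Red (.app r t) (.app s t)
  | congAppR (t) {r s} : Red r s → Red (.app t r) (.app t s)
  | congPairL (t) {r s} : Red r s → Red (.pair r t) (.pair s t)
  | congPairR (t) {r s} : Red r s → Red (.pair t r) (.pair t s)
  | congProj (A) {r s} : Red r s → Red (.proj A r) (.proj A s)
  | congTlam (X) {r s} : Red r s → Red (.tlam X r) (.tlam X s)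
  | congTapp (A) {r s} : Red r s → Red (.tapp r A) (.tapp s A)

/-- ⇄*: reflexive-transitive closure of ⇄. -/
def SeqStar : Tm → Tm → Prop := Relation.ReflTransGen StEq

/-- The operational semantics → = ⇄* ∘ ↪ ∘ ⇄*. -/
def Step (r s : Tm) : Prop := ∃ r' s', SeqStar r r' ∧ Red r' s' ∧ SeqStar s' s

/-- Strong normalisation with respect to →. -/
def SN (r : Tm) : Prop := Acc (fun a b => Step b a) r

/-- The measure P on terms. -/
def Pm : Tm → ℕ
  | .var _ _ => 0
  | .lam _ _ r => Pm r
  | .app r _ => Pm r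
  | .pair r s => 1 + Pm r + Pm s
  | .proj _ r => Pm r
  | .tlam _ r => Pm r
  | .tapp r _ => Pm r

/-- The measure M on terms. -/
def Mm : Tm → ℕ
  | .var _ _ => 1
  | .lam _ _ r => 1 + Mm r + Pm r
  | .app r s => Mm r + Mm s + Pm r * Mm s
  | .pair r s => Mm r + Mm s
  | .proj _ r => 1 + Mm r + Pm r
  | .tlam _ r => 1 + Mm r + Pm r
  | .tapp r _ => 1 + Mm r + Pm r

/-! ### Auxiliary development for eq_primes -/

/-- Injective encoding of types into ℕ. -/
def enc : Ty → ℕ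
  | .var X => Nat.pair 0 X
  | .arr A B => Nat.pair 1 (Nat.pair (enc A) (enc B))
  | .conj A B => Nat.pair 2 (Nat.pair (enc A) (enc B))
  | .all X A => Nat.pair 3 (Nat.pair X (enc A))

theorem enc_inj : ∀ a b : Ty, enc a = enc b → a = b := by
  intro a
  induction a with
  | var X => intro b h; cases b <;> simp [enc, Nat.pair_eq_pair] at h; simp [h]
  | arr A B ihA ihB =>
      intro b h; cases b <;> simp [enc, Nat.pair_eq_pair] at h
      exact by rw [ihA _ h.1, ihB _ h.2]
  | conj A B ihA ihB =>
      intro b h; cases b <;> simp [enc, Nat.pair_eq_pair] at h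
      exact by rw [ihA _ h.1, ihB _ h.2]
  | all X A ihA =>
      intro b h; cases b <;> simp [enc, Nat.pair_eq_pair] at h
      exact by rw [h.1, ihA _ h.2]

/-- A total order on types, via the encoding. -/
def tle (a b : Ty) : Prop := enc a ≤ enc b

instance : DecidableRel tle := fun a b => inferInstanceAs (Decidable (enc a ≤ enc b))
instance : IsTrans Ty tle := ⟨fun _ _ _ h1 h2 => le_trans h1 h2⟩
instance : IsAntisymm Ty tle := ⟨fun a b h1 h2 => enc_inj a b (le_antisymm h1 h2)⟩
instance : IsTotal Ty tle := ⟨fun a b => le_total (enc a) (enc b)⟩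

/-- Canonical sorted list of a multiset of types. -/
def sortT (m : Multiset Ty) : List Ty := m.sort tle

theorem coe_sortT (m : Multiset Ty) : (sortT m : Multiset Ty) = m := Multiset.sort_eq _ _

theorem sortT_ne_nil {m : Multiset Ty} (h : m ≠ 0) : sortT m ≠ [] := by
  intro hn; apply h; rw [← coe_sortT m, hn]; rfl

theorem mem_sortT {p : Ty} {m : Multiset Ty} : p ∈ sortT m ↔ p ∈ m := by
  rw [← Multiset.mem_coe, coe_sortT]

/-- Canonical conjunction of a multiset of types. -/
def conjM (m : Multiset Ty) : Ty := conjList (sortT m)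

theorem sortT_singleton (t : Ty) : sortT {t} = [t] := by
  have := coe_sortT {t}
  rwa [Multiset.coe_eq_singleton] at this

theorem conjM_singleton (t : Ty) : conjM {t} = t := by
  rw [conjM, sortT_singleton]; rfl

/-- t is not a conjunction. -/
def notConj : Ty → Prop
  | .conj _ _ => False
  | _ => True

/-- t is not an arrow. -/
def notArr : Ty → Prop
  | .arr _ _ => False
  | _ => True

/-- Split a right-nested conjunction into its components. -/
def splitC : Ty → Multiset Ty
  | .conj a b => a ::ₘ splitC b
  | t => {t}

theorem conjList_cons (a : Ty) (l : List Ty) (h : l ≠ []) :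
    conjList (a :: l) = .conj a (conjList l) := by
  cases l with
  | nil => exact absurd rfl h
  | cons b l => rfl

theorem splitC_conjList (l : List Ty) (h : l ≠ []) (h2 : ∀ t ∈ l, notConj t) :
    splitC (conjList l) = (l : Multiset Ty) := by
  induction l with
  | nil => exact absurd rfl h
  | cons a l ih =>
      cases l with
      | nil =>
          have ha : notConj a := h2 a (by simp)
          show splitC a = _
          cases a <;> simp [notConj] at ha <;> simp [splitC]
      | cons b l' =>
          rw [conjList_cons a _ (by simp)]
          show a ::ₘ splitC (conjList (b :: l')) = _
          rw [ih (by simp) (fun t ht => h2 t (List.mem_cons_of_mem a ht))]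
          rfl

theorem splitC_conjM {m : Multiset Ty} (h : m ≠ 0) (h2 : ∀ t ∈ m, notConj t) :
    splitC (conjM m) = m := by
  rw [conjM, splitC_conjList _ (sortT_ne_nil h) (fun t ht => h2 t (mem_sortT.1 ht)), coe_sortT]

/-- Canonical prime types. -/
inductive Canon : Ty → Prop
  | var (Y) : Canon (.var Y)
  | arr (m t) : m ≠ 0 → (∀ p ∈ m, Canon p) → Canon t → notArr t → Canon (.arr (conjM m) t)
  | all (X t) : Canon t → Canon (.all X t)

theorem Canon.notConj {t : Ty} (h : Canon t) : notConj t := by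
  cases h <;> trivial

theorem canon_arr_inv {C D : Ty} (h : Canon (.arr C D)) :
    ∃ m, C = conjM m ∧ m ≠ 0 ∧ (∀ p ∈ m, Canon p) ∧ Canon D ∧ notArr D := by
  cases h with
  | arr m t h1 h2 h3 h4 => exact ⟨m, rfl, h1, h2, h3, h4⟩

/-- Merge a block of primes into an already-canonical prime/arrow. -/
def mergeArr (m : Multiset Ty) : Ty → Ty
  | .arr C D => .arr (conjM (m + splitC C)) D
  | t => .arr (conjM m) t

/-- Push a multiset of argument primes into a canonical prime. -/
def pushC : Multiset Ty → Ty → Ty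
  | args, .var Y => if args = 0 then .var Y else .arr (conjM args) (.var Y)
  | args, .arr C D => mergeArr (splitC C) (pushC args D)
  | args, .all X t =>
      if args.filter (fun p => X ∈ ftv p) = 0 then
        .all X (pushC (args.filter (fun p => X ∉ ftv p)) t)
      else
        .arr (conjM (args.filter (fun p => X ∈ ftv p)))
          (.all X (pushC (args.filter (fun p => X ∉ ftv p)) t))
  | _, .conj C D => .conj C D

/-- Prime factors (canonical). -/
def nf : Ty → Multiset Ty
  | .var Y => {.var Y}
  | .arr A B => (nf B).map (pushC (nf A))
  | .conj A B => nf A + nf B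
  | .all X A => (nf A).map (.all X)

theorem nf_ne (A : Ty) : nf A ≠ 0 := by
  induction A <;> simp [nf] <;> simp_all [Multiset.eq_zero_iff_forall_notMem]

theorem pushC_zero {t : Ty} (h : Canon t) : pushC 0 t = t := by
  induction h with
  | var Y => simp [pushC]
  | arr m D h1 h2 h3 h4 ih2 ih3 =>
      show mergeArr (splitC (conjM m)) (pushC 0 D) = _
      rw [ih3, splitC_conjM h1 (fun p hp => (h2 p hp).notConj)]
      cases D <;> simp [notArr] at h4 <;> rfl
  | all X t h ih => simp [pushC, ih]

theorem mergeArr_canon {m : Multiset Ty} {u : Ty} (hm : m ≠ 0) (hmc : ∀ p ∈ m, Canon p)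
    (hu : Canon u) : Canon (mergeArr m u) := by
  cases hu with
  | var Y => exact Canon.arr m _ hm hmc (Canon.var Y) trivial
  | arr k D h1 h2 h3 h4 =>
      show Canon (.arr (conjM (m + splitC (conjM k))) D)
      rw [splitC_conjM h1 (fun p hp => (h2 p hp).notConj)]
      exact Canon.arr (m + k) D (by simp [hm]) (by
        intro p hp; rcases Multiset.mem_add.1 hp with h | h
        exacts [hmc p h, h2 p h]) h3 h4
  | all X t h => exact Canon.arr m _ hm hmc (Canon.all X t h) trivial

theorem pushC_canon {t : Ty} (h : Canon t) :
    ∀ args : Multiset Ty, (∀ p ∈ args, Canon p) → Canon (pushC args t) := by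
  induction h with
  | var Y =>
      intro args hargs
      by_cases h0 : args = 0 <;> simp [pushC, h0]
      · exact Canon.var Y
      · exact Canon.arr args _ h0 hargs (Canon.var Y) trivial
  | arr m D h1 h2 h3 h4 ih2 ih3 =>
      intro args hargs
      show Canon (mergeArr (splitC (conjM m)) (pushC args D))
      rw [splitC_conjM h1 (fun p hp => (h2 p hp).notConj)]
      exact mergeArr_canon h1 h2 (ih3 args hargs)
  | all X t h ih =>
      intro args hargs
      have hgo : ∀ p ∈ args.filter (fun p => X ∉ ftv p), Canon p :=
        fun p hp => hargs p (Multiset.mem_of_mem_filter hp)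
      by_cases h0 : args.filter (fun p => X ∈ ftv p) = 0 <;> simp only [pushC, h0, if_pos, if_neg, ite_true, ite_false]
      · exact Canon.all X _ (ih _ hgo)
      · exact Canon.arr _ _ h0 (fun p hp => hargs p (Multiset.mem_of_mem_filter hp))
          (Canon.all X _ (ih _ hgo)) trivial

theorem nf_canon (A : Ty) : ∀ p ∈ nf A, Canon p := by
  induction A with
  | var Y => intro p hp; simp [nf] at hp; subst hp; exact Canon.var Y
  | arr A B ihA ihB =>
      intro p hp; simp [nf] at hp
      obtain ⟨q, hq, rfl⟩ := hp
      exact pushC_canon (ihB q hq) (nf A) ihA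
  | conj A B ihA ihB =>
      intro p hp; rcases Multiset.mem_add.1 hp with h | h
      exacts [ihA p h, ihB p h]
  | all X A ihA =>
      intro p hp; simp [nf] at hp
      obtain ⟨q, hq, rfl⟩ := hp
      exact Canon.all X q (ihA q hq)

theorem splitC_ne (C : Ty) : splitC C ≠ 0 := by
  cases C <;> simp [splitC]

theorem mergeArr_mergeArr {m k : Multiset Ty} {w : Ty} (hk : k ≠ 0)
    (hkc : ∀ p ∈ k, notConj p) (hw : Canon w) :
    mergeArr m (mergeArr k w) = mergeArr (m + k) w := by
  cases hw with
  | var Y => show mergeArr m (.arr (conjM k) _) = _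
             show Ty.arr (conjM (m + splitC (conjM k))) _ = _
             rw [splitC_conjM hk hkc]; rfl
  | all X t h => show mergeArr m (.arr (conjM k) _) = _
                 show Ty.arr (conjM (m + splitC (conjM k))) _ = _
                 rw [splitC_conjM hk hkc]; rfl
  | arr j D h1 h2 h3 h4 =>
      have hj := splitC_conjM h1 (fun p hp => (h2 p hp).notConj)
      show mergeArr m (.arr (conjM (k + splitC (conjM j))) D) = .arr (conjM ((m + k) + splitC (conjM j))) D
      rw [hj]
      show Ty.arr (conjM (m + splitC (conjM (k + j)))) D = _
      rw [splitC_conjM (by simp [hk]) (by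
        intro p hp; rcases Multiset.mem_add.1 hp with h | h
        exacts [hkc p h, (h2 p h).notConj]), add_assoc]

theorem pushC_mergeArr {a m : Multiset Ty} {u : Ty} (hm : m ≠ 0)
    (hmc : ∀ p ∈ m, notConj p) (hu : Canon u) (hac : ∀ p ∈ a, Canon p) :
    pushC a (mergeArr m u) = mergeArr m (pushC a u) := by
  cases hu with
  | var Y =>
      show pushC a (.arr (conjM m) _) = _
      show mergeArr (splitC (conjM m)) (pushC a (.var Y)) = _
      rw [splitC_conjM hm hmc]
  | all X t h =>
      show pushC a (.arr (conjM m) _) = _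
      show mergeArr (splitC (conjM m)) (pushC a (.all X t)) = _
      rw [splitC_conjM hm hmc]
  | arr j D h1 h2 h3 h4 =>
      have hj := splitC_conjM h1 (fun p hp => (h2 p hp).notConj)
      show pushC a (.arr (conjM (m + splitC (conjM j))) D) = mergeArr m (pushC a (.arr (conjM j) D))
      rw [hj]
      show mergeArr (splitC (conjM (m + j))) (pushC a D) = mergeArr m (mergeArr (splitC (conjM j)) (pushC a D))
      rw [hj, splitC_conjM (by simp [hm]) (by
        intro p hp; rcases Multiset.mem_add.1 hp with h | h
        exacts [hmc p h, (h2 p h).notConj])]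
      rw [mergeArr_mergeArr h1 (fun p hp => (h2 p hp).notConj) (pushC_canon h3 a hac)]

theorem pushC_pushC {t : Ty} (ht : Canon t) :
    ∀ a1 a2 : Multiset Ty, (∀ p ∈ a1, Canon p) → (∀ p ∈ a2, Canon p) →
    pushC a1 (pushC a2 t) = pushC (a1 + a2) t := by
  induction ht with
  | var Y =>
      intro a1 a2 h1 h2
      by_cases h20 : a2 = 0
      · subst h20; rw [show pushC 0 (Ty.var Y) = Ty.var Y by simp [pushC], add_zero]
      · rw [show pushC a2 (Ty.var Y) = .arr (conjM a2) (.var Y) by simp [pushC, h20]]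
        show mergeArr (splitC (conjM a2)) (pushC a1 (.var Y)) = _
        rw [splitC_conjM h20 (fun p hp => (h2 p hp).notConj)]
        by_cases h10 : a1 = 0
        · subst h10
          rw [show pushC 0 (Ty.var Y) = Ty.var Y by simp [pushC], zero_add,
            show pushC a2 (Ty.var Y) = .arr (conjM a2) (.var Y) by simp [pushC, h20]]
          rfl
        · rw [show pushC a1 (Ty.var Y) = .arr (conjM a1) (.var Y) by simp [pushC, h10]]
          show Ty.arr (conjM (a2 + splitC (conjM a1))) _ = _
          rw [splitC_conjM h10 (fun p hp => (h1 p hp).notConj), add_comm a2 a1]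
          rw [show pushC (a1 + a2) (Ty.var Y) = .arr (conjM (a1 + a2)) (.var Y) by
            simp [pushC, h10, add_eq_zero]]
  | arr m D hm hmc hD hna ih2 ih3 =>
      intro a1 a2 h1 h2
      have hm' := splitC_conjM hm (fun p hp => (hmc p hp).notConj)
      show pushC a1 (mergeArr (splitC (conjM m)) (pushC a2 D)) =
        mergeArr (splitC (conjM m)) (pushC (a1 + a2) D)
      rw [hm', pushC_mergeArr hm (fun p hp => (hmc p hp).notConj) (pushC_canon hD a2 h2) h1,
        ih3 a1 a2 h1 h2]
  | all X t ht ih =>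
      intro a1 a2 h1 h2
      have hfilt : ∀ (q : Ty → Prop) [DecidablePred q],
          (a1 + a2).filter q = a1.filter q + a2.filter q := by
        intro q _; exact Multiset.filter_add q a1 a2
      have hg1 : ∀ p ∈ a1.filter (fun p => X ∉ ftv p), Canon p :=
        fun p hp => h1 p (Multiset.mem_of_mem_filter hp)
      have hg2 : ∀ p ∈ a2.filter (fun p => X ∉ ftv p), Canon p :=
        fun p hp => h2 p (Multiset.mem_of_mem_filter hp)
      have hIH := ih _ _ hg1 hg2
      by_cases hs2 : a2.filter (fun p => X ∈ ftv p) = 0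
      · rw [show pushC a2 (Ty.all X t) = .all X (pushC (a2.filter (fun p => X ∉ ftv p)) t) by
          simp [pushC, hs2]]
        by_cases hs1 : a1.filter (fun p => X ∈ ftv p) = 0
        · simp only [pushC, hfilt, hs1, hs2, add_zero, if_pos, hIH]
        · simp only [pushC, hfilt, hs1, hs2, add_zero, if_neg, ite_false, hIH]
      · rw [show pushC a2 (Ty.all X t) = .arr (conjM (a2.filter (fun p => X ∈ ftv p)))
            (.all X (pushC (a2.filter (fun p => X ∉ ftv p)) t)) by simp [pushC, hs2]]
        show mergeArr (splitC (conjM (a2.filter (fun p => X ∈ ftv p))))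
          (pushC a1 (.all X (pushC (a2.filter (fun p => X ∉ ftv p)) t))) = _
        rw [splitC_conjM hs2 (fun p hp => (h2 p (Multiset.mem_of_mem_filter hp)).notConj)]
        by_cases hs1 : a1.filter (fun p => X ∈ ftv p) = 0
        · rw [show pushC a1 (Ty.all X (pushC (a2.filter (fun p => X ∉ ftv p)) t)) =
              .all X (pushC (a1.filter (fun p => X ∉ ftv p)) (pushC (a2.filter (fun p => X ∉ ftv p)) t)) by
            simp [pushC, hs1]]
          rw [hIH]
          show Ty.arr (conjM (a2.filter (fun p => X ∈ ftv p))) _ = _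
          simp only [pushC, hfilt, hs1, hs2, zero_add, if_neg, ite_false]
        · rw [show pushC a1 (Ty.all X (pushC (a2.filter (fun p => X ∉ ftv p)) t)) =
              .arr (conjM (a1.filter (fun p => X ∈ ftv p)))
                (.all X (pushC (a1.filter (fun p => X ∉ ftv p)) (pushC (a2.filter (fun p => X ∉ ftv p)) t))) by
            simp [pushC, hs1]]
          rw [hIH]
          show Ty.arr (conjM (a2.filter (fun p => X ∈ ftv p) + splitC (conjM (a1.filter (fun p => X ∈ ftv p))))) _ = _
          rw [splitC_conjM hs1 (fun p hp => (h1 p (Multiset.mem_of_mem_filter hp)).notConj),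
            add_comm (a2.filter _) (a1.filter _)]
          have : (a1 + a2).filter (fun p => X ∈ ftv p) ≠ 0 := by
            rw [hfilt]; simp [hs1, add_eq_zero]
          simp only [pushC, hfilt, if_neg this, ite_false, hs1]
          simp [hs1]

theorem ftv_conjList {l : List Ty} (hne : l ≠ []) {X : ℕ} (h : X ∈ ftv (conjList l)) :
    ∃ p ∈ l, X ∈ ftv p := by
  induction l with
  | nil => exact absurd rfl hne
  | cons a l ih =>
      cases l with
      | nil => exact ⟨a, by simp, h⟩
      | cons b l' =>
          rw [conjList_cons a _ (by simp)] at h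
          rcases Finset.mem_union.1 h with h | h
          · exact ⟨a, by simp, h⟩
          · obtain ⟨p, hp, hx⟩ := ih (by simp) h
            exact ⟨p, List.mem_cons_of_mem a hp, hx⟩

theorem ftv_conjM {m : Multiset Ty} (hne : m ≠ 0) {X : ℕ} (h : X ∈ ftv (conjM m)) :
    ∃ p ∈ m, X ∈ ftv p := by
  obtain ⟨p, hp, hx⟩ := ftv_conjList (sortT_ne_nil hne) h
  exact ⟨p, mem_sortT.1 hp, hx⟩

theorem ftv_splitC {C p : Ty} (hp : p ∈ splitC C) {X : ℕ} (h : X ∈ ftv p) : X ∈ ftv C := by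
  induction C with
  | conj a b iha ihb =>
      rcases Multiset.mem_cons.1 hp with rfl | hp'
      · exact Finset.mem_union.2 (Or.inl h)
      · exact Finset.mem_union.2 (Or.inr (ihb hp'))
  | var Y => simp [splitC] at hp; subst hp; exact h
  | arr a b iha ihb => simp [splitC] at hp; subst hp; exact h
  | all Y a iha => simp [splitC] at hp; subst hp; exact h

theorem mergeArr_ftv {m : Multiset Ty} {u : Ty} {X : ℕ} (hm0 : m ≠ 0)
    (h : X ∈ ftv (mergeArr m u)) :
    X ∈ ftv u ∨ ∃ p ∈ m, X ∈ ftv p := by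
  cases u with
  | arr C D =>
      rcases Finset.mem_union.1 h with h | h
      · by_cases hm : m + splitC C = 0
        · simp [add_eq_zero] at hm; exact absurd hm.2 (splitC_ne C)
        · obtain ⟨p, hp, hx⟩ := ftv_conjM hm h
          rcases Multiset.mem_add.1 hp with hp | hp
          · exact Or.inr ⟨p, hp, hx⟩
          · exact Or.inl (Finset.mem_union.2 (Or.inl (ftv_splitC hp hx)))
      · exact Or.inl (Finset.mem_union.2 (Or.inr h))
  | var Y =>
      rcases Finset.mem_union.1 h with h | h
      · exact Or.inr (ftv_conjM hm0 h)
      · exact Or.inl h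
  | conj a b =>
      rcases Finset.mem_union.1 h with h | h
      · exact Or.inr (ftv_conjM hm0 h)
      · exact Or.inl h
  | all Y a =>
      rcases Finset.mem_union.1 h with h | h
      · exact Or.inr (ftv_conjM hm0 h)
      · exact Or.inl h

theorem pushC_ftv {q : Ty} {args : Multiset Ty} {X : ℕ} (h : X ∈ ftv (pushC args q)) :
    X ∈ ftv q ∨ ∃ p ∈ args, X ∈ ftv p := by
  induction q generalizing args with
  | var Y =>
      by_cases h0 : args = 0
      · subst h0; simp [pushC] at h; exact Or.inl h
      · simp only [pushC, if_neg h0] at h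
        rcases Finset.mem_union.1 h with h | h
        · exact Or.inr (ftv_conjM h0 h)
        · exact Or.inl h
  | arr C D ihC ihD =>
      show X ∈ ftv (.arr C D) ∨ _
      have h' : X ∈ ftv (mergeArr (splitC C) (pushC args D)) := h
      rcases mergeArr_ftv (splitC_ne C) h' with h | ⟨p, hp, hx⟩
      · rcases ihD h with h | h
        · exact Or.inl (Finset.mem_union.2 (Or.inr h))
        · exact Or.inr h
      · exact Or.inl (Finset.mem_union.2 (Or.inl (ftv_splitC hp hx)))
  | conj a b iha ihb => exact Or.inl h
  | all Y t iht =>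
      have hgo : X ∈ ftv (.all Y (pushC (args.filter (fun p => Y ∉ ftv p)) t)) →
          X ∈ ftv (.all Y t) ∨ ∃ p ∈ args, X ∈ ftv p := by
        intro hh
        rcases Finset.mem_sdiff.1 hh with ⟨h1, h2⟩
        rcases iht h1 with h | ⟨p, hp, hx⟩
        · exact Or.inl (Finset.mem_sdiff.2 ⟨h, h2⟩)
        · exact Or.inr ⟨p, Multiset.mem_of_mem_filter hp, hx⟩
      by_cases hs : args.filter (fun p => Y ∈ ftv p) = 0
      · simp only [pushC, if_pos hs] at h
        exact hgo h
      · simp only [pushC, if_neg hs] at h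
        rcases Finset.mem_union.1 h with h | h
        · obtain ⟨p, hp, hx⟩ := ftv_conjM hs h
          exact Or.inr ⟨p, Multiset.mem_of_mem_filter hp, hx⟩
        · exact hgo h

theorem nf_ftv {A p : Ty} (hp : p ∈ nf A) {X : ℕ} (h : X ∈ ftv p) : X ∈ ftv A := by
  induction A generalizing p with
  | var Y => simp [nf] at hp; subst hp; exact h
  | arr A B ihA ihB =>
      simp [nf] at hp; obtain ⟨q, hq, rfl⟩ := hp
      rcases pushC_ftv h with h | ⟨r, hr, hx⟩
      · exact Finset.mem_union.2 (Or.inr (ihB hq h))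
      · exact Finset.mem_union.2 (Or.inl (ihA hr hx))
  | conj A B ihA ihB =>
      rcases Multiset.mem_add.1 hp with hp | hp
      · exact Finset.mem_union.2 (Or.inl (ihA hp h))
      · exact Finset.mem_union.2 (Or.inr (ihB hp h))
  | all Y A ihA =>
      simp [nf] at hp; obtain ⟨q, hq, rfl⟩ := hp
      rcases Finset.mem_sdiff.1 h with ⟨h1, h2⟩
      exact Finset.mem_sdiff.2 ⟨ihA hq h1, h2⟩

theorem nf_equiv {A B : Ty} (h : TyEquiv A B) : nf A = nf B := by
  induction h with
  | comm A B => exact add_comm _ _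
  | assoc A B C => exact (add_assoc _ _ _).symm
  | distArr A B C => simp [nf, Multiset.map_add]
  | curry A B C =>
      show ((nf C).map (pushC (nf A + nf B))) = ((nf C).map (pushC (nf B))).map (pushC (nf A))
      rw [Multiset.map_map]
      apply Multiset.map_congr rfl
      intro q hq
      exact (pushC_pushC (nf_canon C q hq) (nf A) (nf B) (nf_canon A) (nf_canon B)).symm
  | allArr X A B hX =>
      show ((nf B).map (pushC (nf A))).map (.all X) = ((nf B).map (.all X)).map (pushC (nf A))
      rw [Multiset.map_map, Multiset.map_map]
      apply Multiset.map_congr rfl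
      intro q hq
      show Ty.all X (pushC (nf A) q) = pushC (nf A) (.all X q)
      have hs : (nf A).filter (fun p => X ∈ ftv p) = 0 := by
        rw [Multiset.filter_eq_nil]
        intro p hp hmem
        exact hX (nf_ftv hp hmem)
      have hg : (nf A).filter (fun p => X ∉ ftv p) = nf A := by
        rw [Multiset.filter_eq_self]
        intro p hp hmem
        exact hX (nf_ftv hp hmem)
      simp [pushC, hs, hg]
  | allConj X A B => simp [nf, Multiset.map_add]
  | refl A => rfl
  | symm h ih => exact ih.symm
  | trans h1 h2 ih1 ih2 => exact ih1.trans ih2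
  | congArr h1 h2 ih1 ih2 => show Multiset.map _ _ = Multiset.map _ _; rw [ih1, ih2]
  | congConj h1 h2 ih1 ih2 => show _ + _ = _ + _; rw [ih1, ih2]
  | congAll X h ih => show Multiset.map _ _ = Multiset.map _ _; rw [ih]

theorem conjList_perm {l l' : List Ty} (h : l.Perm l') : TyEquiv (conjList l) (conjList l') := by
  induction h with
  | nil => exact TyEquiv.refl _
  | cons a h ih =>
      rename_i l1 l2
      cases l1 with
      | nil => rw [List.Perm.eq_nil h.symm]; exact TyEquiv.refl _
      | cons b t =>
          cases l2 with
          | nil => exact absurd h.symm (by simp [List.Perm])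
          | cons c t' =>
              rw [conjList_cons a _ (by simp), conjList_cons a _ (by simp)]
              exact TyEquiv.congConj (TyEquiv.refl a) ih
  | swap a b l =>
      cases l with
      | nil => exact TyEquiv.comm b a
      | cons c t =>
          rw [conjList_cons b _ (by simp), conjList_cons a _ (by simp),
            conjList_cons a _ (by simp), conjList_cons b _ (by simp)]
          -- b ∧ (a ∧ X) ≡ a ∧ (b ∧ X)
          exact TyEquiv.trans (TyEquiv.assoc _ _ _)
            (TyEquiv.trans (TyEquiv.congConj (TyEquiv.comm b a) (TyEquiv.refl _))
              (TyEquiv.symm (TyEquiv.assoc _ _ _)))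
  | trans h1 h2 ih1 ih2 => exact ih1.trans ih2

theorem conjList_append {l1 l2 : List Ty} (h1 : l1 ≠ []) (h2 : l2 ≠ []) :
    TyEquiv (conjList (l1 ++ l2)) (.conj (conjList l1) (conjList l2)) := by
  induction l1 with
  | nil => exact absurd rfl h1
  | cons a t ih =>
      cases t with
      | nil =>
          rw [List.singleton_append, conjList_cons a _ h2]
          exact TyEquiv.refl _
      | cons b t' =>
          rw [List.cons_append, conjList_cons a _ (by simp [h2]), conjList_cons a _ (by simp)]
          exact TyEquiv.trans (TyEquiv.congConj (TyEquiv.refl a) (ih (by simp)))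
            (TyEquiv.assoc _ _ _)

theorem conjM_coe {l : List Ty} : TyEquiv (conjList l) (conjM (l : Multiset Ty)) := by
  apply conjList_perm
  rw [← Multiset.coe_eq_coe, coe_sortT]

theorem conjM_add {m k : Multiset Ty} (hm : m ≠ 0) (hk : k ≠ 0) :
    TyEquiv (.conj (conjM m) (conjM k)) (conjM (m + k)) := by
  have h1 : TyEquiv (conjList (sortT m ++ sortT k)) (.conj (conjM m) (conjM k)) :=
    conjList_append (sortT_ne_nil hm) (sortT_ne_nil hk)
  have h2 : TyEquiv (conjList (sortT m ++ sortT k)) (conjM (m + k)) := by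
    have : ((sortT m ++ sortT k : List Ty) : Multiset Ty) = m + k := by
      rw [← Multiset.coe_add, coe_sortT, coe_sortT]
    rw [← this]; exact conjM_coe
  exact TyEquiv.trans (TyEquiv.symm h1) h2

theorem conjM_rel {m k : Multiset Ty} (h : Multiset.Rel TyEquiv m k) (hm : m ≠ 0) :
    TyEquiv (conjM m) (conjM k) := by
  induction h with
  | zero => exact absurd rfl hm
  | cons hab h ih =>
      rename_i a b m' k'
      by_cases hm' : m' = 0
      · subst hm'
        rw [Multiset.rel_zero_left] at h; subst h
        simpa [conjM_singleton] using hab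
      · have hk' : k' ≠ 0 := by
          intro h0; subst h0; rw [Multiset.rel_zero_right] at h; exact hm' h
        have e1 : TyEquiv (.conj a (conjM m')) (conjM (a ::ₘ m')) := by
          have := conjM_add (m := {a}) (k := m') (by simp) hm'
          rwa [conjM_singleton, Multiset.singleton_add] at this
        have e2 : TyEquiv (.conj b (conjM k')) (conjM (b ::ₘ k')) := by
          have := conjM_add (m := {b}) (k := k') (by simp) hk'
          rwa [conjM_singleton, Multiset.singleton_add] at this
        exact TyEquiv.trans (TyEquiv.symm e1)
          (TyEquiv.trans (TyEquiv.congConj hab (ih hm')) e2)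

theorem rel_map_same {f g : Ty → Ty} {m : Multiset Ty} (h : ∀ a ∈ m, TyEquiv (f a) (g a)) :
    Multiset.Rel TyEquiv (m.map f) (m.map g) := by
  induction m using Multiset.induction with
  | empty => simp [Multiset.rel_zero_left]
  | cons a m ih =>
      simp only [Multiset.map_cons]
      exact Multiset.Rel.cons (h a (by simp)) (ih (fun a ha => h a (by simp [ha])))

theorem all_conjList {X : ℕ} {l : List Ty} (h : l ≠ []) :
    TyEquiv (.all X (conjList l)) (conjList (l.map (.all X))) := by
  induction l with
  | nil => exact absurd rfl h
  | cons a t ih =>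
      cases t with
      | nil => exact TyEquiv.refl _
      | cons b t' =>
          show TyEquiv (.all X (.conj a (conjList (b :: t'))))
            (.conj (.all X a) (conjList ((b :: t').map (.all X))))
          exact TyEquiv.trans (TyEquiv.allConj X a _)
            (TyEquiv.congConj (TyEquiv.refl _) (ih (by simp)))

theorem all_conjM {X : ℕ} {m : Multiset Ty} (hm : m ≠ 0) :
    TyEquiv (.all X (conjM m)) (conjM (m.map (.all X))) := by
  have h1 := all_conjList (X := X) (l := sortT m) (sortT_ne_nil hm)
  have h2 : TyEquiv (conjList ((sortT m).map (.all X))) (conjM (m.map (.all X))) := by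
    have : (((sortT m).map (.all X) : List Ty) : Multiset Ty) = m.map (.all X) := by
      rw [← Multiset.map_coe, coe_sortT]
    rw [← this]; exact conjM_coe
  exact TyEquiv.trans h1 h2

theorem arr_conjList {C : Ty} {l : List Ty} (h : l ≠ []) :
    TyEquiv (.arr C (conjList l)) (conjList (l.map (.arr C))) := by
  induction l with
  | nil => exact absurd rfl h
  | cons a t ih =>
      cases t with
      | nil => exact TyEquiv.refl _
      | cons b t' =>
          show TyEquiv (.arr C (.conj a (conjList (b :: t'))))
            (.conj (.arr C a) (conjList ((b :: t').map (.arr C))))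
          exact TyEquiv.trans (TyEquiv.distArr C a _)
            (TyEquiv.congConj (TyEquiv.refl _) (ih (by simp)))

theorem arr_conjM {C : Ty} {m : Multiset Ty} (hm : m ≠ 0) :
    TyEquiv (.arr C (conjM m)) (conjM (m.map (.arr C))) := by
  have h1 := arr_conjList (C := C) (l := sortT m) (sortT_ne_nil hm)
  have h2 : TyEquiv (conjList ((sortT m).map (.arr C))) (conjM (m.map (.arr C))) := by
    have : (((sortT m).map (.arr C) : List Ty) : Multiset Ty) = m.map (.arr C) := by
      rw [← Multiset.map_coe, coe_sortT]
    rw [← this]; exact conjM_coe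
  exact TyEquiv.trans h1 h2

theorem mergeArr_sound {m : Multiset Ty} {u : Ty} (hm : m ≠ 0)
    (hmc : ∀ p ∈ m, notConj p) (hu : Canon u) :
    TyEquiv (.arr (conjM m) u) (mergeArr m u) := by
  cases hu with
  | var Y => exact TyEquiv.refl _
  | all X t h => exact TyEquiv.refl _
  | arr k D h1 h2 h3 h4 =>
      show TyEquiv _ (.arr (conjM (m + splitC (conjM k))) D)
      rw [splitC_conjM h1 (fun p hp => (h2 p hp).notConj)]
      exact TyEquiv.trans (TyEquiv.symm (TyEquiv.curry (conjM m) (conjM k) D))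
        (TyEquiv.congArr (conjM_add hm h1) (TyEquiv.refl D))

theorem pushC_sound {q : Ty} (hq : Canon q) :
    ∀ args : Multiset Ty, args ≠ 0 → (∀ p ∈ args, Canon p) →
    TyEquiv (.arr (conjM args) q) (pushC args q) := by
  induction hq with
  | var Y =>
      intro args h0 hc
      simp only [pushC, if_neg h0]
      exact TyEquiv.refl _
  | arr m D hm hmc hD hna ih2 ih3 =>
      intro args h0 hc
      show TyEquiv _ (mergeArr (splitC (conjM m)) (pushC args D))
      rw [splitC_conjM hm (fun p hp => (hmc p hp).notConj)]
      -- args ⇒ (m ⇒ D) ≡ (args∧m) ⇒ D ≡ (m∧args) ⇒ D ≡ m ⇒ (args ⇒ D) ≡ m ⇒ pushC args D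
      refine TyEquiv.trans (TyEquiv.symm (TyEquiv.curry (conjM args) (conjM m) D)) ?_
      refine TyEquiv.trans (TyEquiv.congArr (TyEquiv.comm _ _) (TyEquiv.refl D)) ?_
      refine TyEquiv.trans (TyEquiv.curry (conjM m) (conjM args) D) ?_
      refine TyEquiv.trans (TyEquiv.congArr (TyEquiv.refl _) (ih3 args h0 hc)) ?_
      exact mergeArr_sound hm (fun p hp => (hmc p hp).notConj) (pushC_canon hD args hc)
  | all X t ht ih =>
      intro args h0 hc
      set stay := args.filter (fun p => X ∈ ftv p) with hstay
      set go := args.filter (fun p => X ∉ ftv p) with hgo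
      have hsum : stay + go = args := Multiset.filter_add_not _ _
      have hXgo : go ≠ 0 → X ∉ ftv (conjM go) := by
        intro hg0 hX
        obtain ⟨p, hp, hx⟩ := ftv_conjM hg0 hX
        exact (Multiset.of_mem_filter hp) hx
      by_cases hs0 : stay = 0
      · -- args = go
        have hargs : go = args := by rw [← hsum, hs0, zero_add]
        simp only [pushC, ← hstay, ← hgo, if_pos hs0]
        rw [← hargs]
        by_cases hg0 : go = 0
        · exact absurd (by rw [← hsum, hs0, hg0]; rfl) h0
        refine TyEquiv.trans (TyEquiv.symm (TyEquiv.allArr X (conjM go) t (hXgo hg0))) ?_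
        exact TyEquiv.congAll X (TyEquiv.trans
          (ih go hg0 (fun p hp => hc p (Multiset.mem_of_mem_filter hp)))
          (TyEquiv.refl _))
      · simp only [pushC, ← hstay, ← hgo, if_neg hs0]
        by_cases hg0 : go = 0
        · have hargs : stay = args := by rw [← hsum, hg0, add_zero]
          rw [hargs, hg0, pushC_zero ht]
          exact TyEquiv.refl _
        · -- args ≡ stay ∧ go
          have e0 : TyEquiv (conjM args) (.conj (conjM stay) (conjM go)) := by
            rw [← hsum]; exact TyEquiv.symm (conjM_add hs0 hg0)
          refine TyEquiv.trans (TyEquiv.congArr e0 (TyEquiv.refl _)) ?_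
          refine TyEquiv.trans (TyEquiv.curry _ _ _) ?_
          refine TyEquiv.congArr (TyEquiv.refl _) ?_
          refine TyEquiv.trans (TyEquiv.symm (TyEquiv.allArr X (conjM go) t (hXgo hg0))) ?_
          exact TyEquiv.congAll X (ih go hg0 (fun p hp => hc p (Multiset.mem_of_mem_filter hp)))

theorem nf_sound (A : Ty) : TyEquiv A (conjM (nf A)) := by
  induction A with
  | var Y => rw [nf, conjM_singleton]; exact TyEquiv.refl _
  | arr A B ihA ihB =>
      refine TyEquiv.trans (TyEquiv.congArr ihA ihB) ?_
      refine TyEquiv.trans (arr_conjM (nf_ne B)) ?_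
      apply conjM_rel _ (by simp [nf_ne B])
      apply rel_map_same
      intro q hq
      exact pushC_sound (nf_canon B q hq) (nf A) (nf_ne A) (nf_canon A)
  | conj A B ihA ihB =>
      exact TyEquiv.trans (TyEquiv.congConj ihA ihB) (conjM_add (nf_ne A) (nf_ne B))
  | all X A ihA =>
      exact TyEquiv.trans (TyEquiv.congAll X ihA) (all_conjM (nf_ne A))

theorem nf_allList (xs : List ℕ) (t : Ty) :
    nf (allList xs t) = (nf t).map (fun p => allList xs p) := by
  induction xs with
  | nil => simp [allList]
  | cons x xs ih =>
      show nf (.all x (allList xs t)) = _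
      rw [nf, ih, Multiset.map_map]
      rfl

theorem allList_arr_inj : ∀ (xs zs : List ℕ) (C D C' D' : Ty),
    allList xs (.arr C D) = allList zs (.arr C' D') → xs = zs ∧ C = C' ∧ D = D' := by
  intro xs
  induction xs with
  | nil =>
      intro zs C D C' D' h
      cases zs with
      | nil => exact ⟨rfl, (Ty.arr.inj h).1, (Ty.arr.inj h).2⟩
      | cons z zs => exact absurd h (by simp [allList])
  | cons x xs ih =>
      intro zs C D C' D' h
      cases zs with
      | nil => exact absurd h (by simp [allList])
      | cons z zs =>
          have h' : Ty.all x (allList xs (.arr C D)) = Ty.all z (allList zs (.arr C' D')) := h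
          obtain ⟨h1, h2⟩ := Ty.all.inj h'
          obtain ⟨e1, e2, e3⟩ := ih zs C D C' D' h2
          exact ⟨by rw [h1, e1], e2, e3⟩

/-- If ∀X⃗.(A ⇒ Y) ≡ ∀Z⃗.(B ⇒ W) then X⃗ = Z⃗, A ≡ B and Y = W. -/
theorem eq_primes (xs zs : List ℕ) (A B : Ty) (Y W : ℕ)
    (h : TyEquiv (allList xs (.arr A (.var Y))) (allList zs (.arr B (.var W)))) :
    xs = zs ∧ TyEquiv A B ∧ Y = W := by
  have hnf := nf_equiv h
  have compute : ∀ (xs : List ℕ) (A : Ty) (Y : ℕ),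
      nf (allList xs (.arr A (.var Y))) = {allList xs (.arr (conjM (nf A)) (.var Y))} := by
    intro xs A Y
    rw [nf_allList]
    have : nf (Ty.arr A (.var Y)) = {Ty.arr (conjM (nf A)) (.var Y)} := by
      rw [nf, nf, Multiset.map_singleton]
      congr 1
      simp [pushC, nf_ne A]
    rw [this, Multiset.map_singleton]
  rw [compute, compute] at hnf
  have heq := Multiset.singleton_inj.1 hnf
  obtain ⟨e1, e2, e3⟩ := allList_arr_inj _ _ _ _ _ _ heq
  refine ⟨e1, ?_, Ty.var.inj e3⟩
  have hAB : nf A = nf B := by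
    have := congrArg splitC e2
    rwa [splitC_conjM (nf_ne A) (fun p hp => (nf_canon A p hp).notConj),
      splitC_conjM (nf_ne B) (fun p hp => (nf_canon B p hp).notConj)] at this
  exact TyEquiv.trans (nf_sound A) (TyEquiv.trans (hAB ▸ TyEquiv.refl (conjM (nf A)))
    (TyEquiv.symm (nf_sound B)))
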